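/- arXiv:2605.22713 — 2 statements merged into one kernel-verified Lean document; each statement's English description precedes it below -/
import Mathlib

section
/- Let M ⊆ B(H) be a von Neumann algebra and let (R, T, ψ) be a bipartite exact embezzlement protocol for α in (M, M', H). For a list μ = [μ₁, …, μ_m] over Fin d write R_μ = (R μ₁ 0) ∘ ⋯ ∘ (R μ_m 0) and T_μ = (T μ₁ 0) ∘ ⋯ ∘ (T μ_m 0), with empty products equal to 1, and α_μ = ∏ₖ α_{μₖ} (α_[] = 1). Then for all lists μ, ν over Fin d: (R_μ)* R_ν ψ = (α_ν / α_μ) • (T_ν)* T_μ ψ and (T_μ)* T_ν ψ = (α_ν / α_μ) • (R_ν)* R_μ ψ. -/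
open scoped InnerProductSpace
open ContinuousLinearMap

/-- The block operator on `ℓ²(Fin d; H)` associated with a `d × d` matrix of operators on `H`,
acting by `(R x) i = ∑ j, (R i j) (x j)`. -/
noncomputable def blockOp {H : Type*} [NormedAddCommGroup H] [InnerProductSpace ℂ H] {d : ℕ}
    (R : Fin d → Fin d → H →L[ℂ] H) :
    (PiLp 2 fun _ : Fin d => H) →L[ℂ] (PiLp 2 fun _ : Fin d => H) :=
  (((PiLp.continuousLinearEquiv 2 ℂ (fun _ : Fin d => H)).symm :
      (∀ _ : Fin d, H) →L[ℂ] (PiLp 2 fun _ : Fin d => H))) ∘L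
    (ContinuousLinearMap.pi fun i => ∑ j, (R i j) ∘L (ContinuousLinearMap.proj j)) ∘L
    (((PiLp.continuousLinearEquiv 2 ℂ (fun _ : Fin d => H)) :
      (PiLp 2 fun _ : Fin d => H) →L[ℂ] (∀ _ : Fin d, H)))

variable {H : Type*} [NormedAddCommGroup H] [InnerProductSpace ℂ H] [CompleteSpace H]

/-- `R` is a contraction in `M_d ⊗ M`: all blocks lie in `M` and the block operator on
`ℓ²(Fin d; H)` has operator norm at most `1`. -/
def IsContractionIn (M : VonNeumannAlgebra H) {d : ℕ}
    (R : Fin d → Fin d → H →L[ℂ] H) : Prop :=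
  (∀ i j, R i j ∈ M) ∧ ‖blockOp R‖ ≤ 1

/-- A bipartite exact embezzlement protocol for `α` in `(M, M', H)`: `R` is a contraction in
`M_d ⊗ M`, `T` is a contraction with blocks in the commutant `M'`, `ψ` is a unit vector, and
`(R i 0)(T j 0) ψ = δ_{ij} α i • ψ` for all `i, j`. -/
def BipartiteProtocol (M : VonNeumannAlgebra H) {d : ℕ} [NeZero d] (α : Fin d → ℝ)
    (R T : Fin d → Fin d → H →L[ℂ] H) (ψ : H) : Prop :=
  IsContractionIn M R ∧ IsContractionIn M.commutant T ∧ ‖ψ‖ = 1 ∧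
    ∀ i j, (R i 0) ((T j 0) ψ) = (if i = j then (α i : ℂ) else 0) • ψ

/-- A monopartite exact embezzlement protocol for `α` in `(M, H)`: `R` is a contraction in
`M_d ⊗ M`, `ψ` is a unit vector, and `⟨(R i 0)* X (R j 0) ψ, ψ⟩ = δ_{ij} (α i)² ⟨X ψ, ψ⟩`
for all `X ∈ M` and all `i, j`. -/
def MonopartiteProtocol (M : VonNeumannAlgebra H) {d : ℕ} [NeZero d] (α : Fin d → ℝ)
    (R : Fin d → Fin d → H →L[ℂ] H) (ψ : H) : Prop :=
  IsContractionIn M R ∧ ‖ψ‖ = 1 ∧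
    ∀ X ∈ M, ∀ i j : Fin d,
      ⟪(adjoint (R i 0)) (X ((R j 0) ψ)), ψ⟫_ℂ
        = (if i = j then ((α i : ℂ)) ^ 2 else 0) * ⟪X ψ, ψ⟫_ℂ

/-- The orthogonal projection of `H` onto the closure of `{Y ψ : Y ∈ S}`, as an operator
on `H`. -/
noncomputable def suppProjOn (S : Set (H →L[ℂ] H)) (ψ : H) : H →L[ℂ] H :=
  letI K := (Submodule.span ℂ ((fun Y : H →L[ℂ] H => Y ψ) '' S)).topologicalClosure
  K.subtypeL ∘L (K.orthogonalProjectionOnto : H →L[ℂ] K)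

/-- The support projection of the state `⟨· ψ, ψ⟩` on `M`: the orthogonal projection onto
the closure of `M' ψ`. -/
noncomputable def suppP (M : VonNeumannAlgebra H) (ψ : H) : H →L[ℂ] H :=
  suppProjOn (M.commutant : Set (H →L[ℂ] H)) ψ

/-- The support projection of the state `⟨· ψ, ψ⟩` on `M'`: the orthogonal projection onto
the closure of `M ψ`. -/
noncomputable def suppP' (M : VonNeumannAlgebra H) (ψ : H) : H →L[ℂ] H :=
  suppProjOn (M : Set (H →L[ℂ] H)) ψ

section aux
variable {H : Type*} [NormedAddCommGroup H] [InnerProductSpace ℂ H] [CompleteSpace H]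

/-- Norm-saturation for contractions: if `‖A‖ ≤ 1` and `‖A v‖ = ‖v‖` then `A† (A v) = v`. -/
lemma adjoint_apply_of_norm_eq (A : H →L[ℂ] H) (hA : ‖A‖ ≤ 1) (v : H)
    (hv : ‖A v‖ = ‖v‖) : adjoint A (A v) = v := by
  have hAadj : ‖adjoint A‖ ≤ 1 := by
    rw [LinearIsometryEquiv.norm_map]; exact hA
  have hnorm : ‖adjoint A (A v)‖ ≤ ‖v‖ := by
    calc ‖adjoint A (A v)‖ ≤ ‖adjoint A‖ * ‖A v‖ := (adjoint A).le_opNorm _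
      _ ≤ 1 * ‖v‖ := by rw [hv]; gcongr
      _ = ‖v‖ := one_mul _
  have hre : RCLike.re ⟪adjoint A (A v), v⟫_ℂ = ‖v‖ ^ 2 := by
    rw [adjoint_inner_left]
    rw [← hv, ← @inner_self_eq_norm_sq ℂ]
  have key : ‖adjoint A (A v) - v‖ ^ 2 ≤ 0 := by
    rw [@norm_sub_sq ℂ, hre]
    nlinarith [norm_nonneg (adjoint A (A v)), norm_nonneg v]
  have := sq_nonneg ‖adjoint A (A v) - v‖
  have : ‖adjoint A (A v) - v‖ = 0 := by nlinarith
  rw [← sub_eq_zero]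
  exact norm_eq_zero.mp this

lemma col_sum_sq_le {d : ℕ} [NeZero d] (R : Fin d → Fin d → H →L[ℂ] H)
    (hR : ‖blockOp R‖ ≤ 1) (x : H) : ∑ i, ‖R i 0 x‖ ^ 2 ≤ ‖x‖ ^ 2 := by
  set v : PiLp 2 (fun _ : Fin d => H) := (WithLp.equiv 2 _).symm (Pi.single 0 x) with hv
  have happ : ∀ i, blockOp R v i = R i 0 x := by
    intro i
    show (∑ j, (R i j) ∘L (ContinuousLinearMap.proj j)) (Pi.single 0 x) = _
    rw [ContinuousLinearMap.sum_apply]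
    rw [Finset.sum_eq_single 0]
    · simp
    · intro j _ hj; simp [Pi.single_eq_of_ne hj]
    · simp
  have hnv : ‖v‖ ^ 2 = ‖x‖ ^ 2 := by
    rw [PiLp.norm_sq_eq_of_L2]
    rw [Finset.sum_eq_single 0]
    · rfl
    · intro j _ hj
      have : v j = 0 := by
        rw [hv, WithLp.equiv_symm_apply, PiLp.toLp_apply, Pi.single_eq_of_ne hj]
      simp [this]
    · simp
  have h1 : ‖blockOp R v‖ ^ 2 = ∑ i, ‖R i 0 x‖ ^ 2 := by
    rw [PiLp.norm_sq_eq_of_L2]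
    exact Finset.sum_congr rfl fun i _ => by rw [happ]
  have h2 : ‖blockOp R v‖ ≤ ‖v‖ := by
    calc ‖blockOp R v‖ ≤ ‖blockOp R‖ * ‖v‖ := (blockOp R).le_opNorm v
    _ ≤ 1 * ‖v‖ := by gcongr
    _ = ‖v‖ := one_mul _
  rw [← h1, ← hnv]
  exact pow_le_pow_left₀ (norm_nonneg _) h2 2

lemma col_norm_le {d : ℕ} [NeZero d] (R : Fin d → Fin d → H →L[ℂ] H)
    (hR : ‖blockOp R‖ ≤ 1) (i : Fin d) : ‖R i 0‖ ≤ 1 := by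
  refine ContinuousLinearMap.opNorm_le_bound _ zero_le_one fun x => ?_
  have h := col_sum_sq_le R hR x
  have h1 : ‖R i 0 x‖ ^ 2 ≤ ∑ j, ‖R j 0 x‖ ^ 2 :=
    Finset.single_le_sum (f := fun j => ‖R j 0 x‖ ^ 2)
      (fun j _ => sq_nonneg _) (Finset.mem_univ i)
  rw [one_mul]
  nlinarith [norm_nonneg (R i 0 x), norm_nonneg x]
end aux

/-- If `(R, T, ψ)` is a bipartite exact embezzlement protocol for `α`, then for all words
`μ, ν` over `Fin d`, with `R_μ = (R μ₁ 0) ⋯ (R μ_m 0)`, `T_μ = (T μ₁ 0) ⋯ (T μ_m 0)` and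
`α_μ = ∏ₖ α_{μₖ}`: `(R_μ)* R_ν ψ = (α_ν / α_μ) • (T_ν)* T_μ ψ` and
`(T_μ)* T_ν ψ = (α_ν / α_μ) • (R_ν)* R_μ ψ`. -/
theorem switching_words_between_players
    {H : Type*} [NormedAddCommGroup H] [InnerProductSpace ℂ H] [CompleteSpace H]
    (M : VonNeumannAlgebra H) {d : ℕ} [NeZero d] (hd : 2 ≤ d)
    (α : Fin d → ℝ) (hα : ∀ i, 0 < α i) (hsum : ∑ i, (α i) ^ 2 = 1)
    (R T : Fin d → Fin d → H →L[ℂ] H) (ψ : H)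
    (hproto : BipartiteProtocol M α R T ψ) :
    ∀ μ ν : List (Fin d),
      (adjoint ((μ.map (fun i => R i 0)).prod)) (((ν.map (fun i => R i 0)).prod) ψ)
          = ((((ν.map α).prod / (μ.map α).prod : ℝ)) : ℂ) •
            (adjoint ((ν.map (fun i => T i 0)).prod)) (((μ.map (fun i => T i 0)).prod) ψ) ∧
      (adjoint ((μ.map (fun i => T i 0)).prod)) (((ν.map (fun i => T i 0)).prod) ψ)
          = ((((ν.map α).prod / (μ.map α).prod : ℝ)) : ℂ) •
            (adjoint ((ν.map (fun i => R i 0)).prod)) (((μ.map (fun i => R i 0)).prod) ψ) := by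
  
  obtain ⟨⟨hRmem, hRn⟩, ⟨hTmem, hTn⟩, hψ, hRT⟩ := hproto
  have hcomm : ∀ A ∈ M, ∀ B ∈ M.commutant, A * B = B * A := fun A hA B hB =>
    (VonNeumannAlgebra.mem_commutant_iff.mp hB) A hA
  have happcomm : ∀ A ∈ M, ∀ B ∈ M.commutant, ∀ x : H, A (B x) = B (A x) := by
    intro A hA B hB x
    have := congrArg (fun f : H →L[ℂ] H => f x) (hcomm A hA B hB)
    simpa [ContinuousLinearMap.mul_apply] using this
  have hTR : ∀ i j, T i 0 (R j 0 ψ) = (if j = i then (α j : ℂ) else 0) • ψ := by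
    intro i j
    rw [← happcomm (R j 0) (hRmem j 0) (T i 0) (hTmem i 0) ψ, hRT j i]
  -- lower bounds on norms
  have hlowT : ∀ i, α i ≤ ‖T i 0 ψ‖ := by
    intro i
    have h1 : RCLike.re ⟪R i 0 (T i 0 ψ), ψ⟫_ℂ = α i := by
      rw [hRT i i]
      rw [inner_smul_left]
      simp [inner_self_eq_norm_sq_to_K, hψ, Complex.conj_ofReal]
    calc α i = RCLike.re ⟪R i 0 (T i 0 ψ), ψ⟫_ℂ := h1.symm
      _ ≤ ‖R i 0 (T i 0 ψ)‖ * ‖ψ‖ := re_inner_le_norm _ _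
      _ = ‖R i 0 (T i 0 ψ)‖ := by rw [hψ, mul_one]
      _ ≤ ‖R i 0‖ * ‖T i 0 ψ‖ := (R i 0).le_opNorm _
      _ ≤ 1 * ‖T i 0 ψ‖ := by
          gcongr
          exact col_norm_le R hRn i
      _ = ‖T i 0 ψ‖ := one_mul _
  have hlowR : ∀ i, α i ≤ ‖R i 0 ψ‖ := by
    intro i
    have h1 : RCLike.re ⟪T i 0 (R i 0 ψ), ψ⟫_ℂ = α i := by
      rw [hTR i i]
      rw [inner_smul_left]
      simp [inner_self_eq_norm_sq_to_K, hψ, Complex.conj_ofReal]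
    calc α i = RCLike.re ⟪T i 0 (R i 0 ψ), ψ⟫_ℂ := h1.symm
      _ ≤ ‖T i 0 (R i 0 ψ)‖ * ‖ψ‖ := re_inner_le_norm _ _
      _ = ‖T i 0 (R i 0 ψ)‖ := by rw [hψ, mul_one]
      _ ≤ ‖T i 0‖ * ‖R i 0 ψ‖ := (T i 0).le_opNorm _
      _ ≤ 1 * ‖R i 0 ψ‖ := by
          gcongr
          exact col_norm_le T hTn i
      _ = ‖R i 0 ψ‖ := one_mul _
  -- exact norms
  have norm_eq : ∀ (S : Fin d → Fin d → H →L[ℂ] H), ‖blockOp S‖ ≤ 1 →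
      (∀ i, α i ≤ ‖S i 0 ψ‖) → ∀ i, ‖S i 0 ψ‖ = α i := by
    intro S hSn hlow
    have hsum1 : ∑ i, ‖S i 0 ψ‖ ^ 2 ≤ 1 := by
      have := col_sum_sq_le S hSn ψ
      rwa [hψ, one_pow] at this
    have hle : ∀ i ∈ Finset.univ, α i ^ 2 ≤ ‖S i 0 ψ‖ ^ 2 :=
      fun i _ => pow_le_pow_left₀ (hα i).le (hlow i) 2
    have hsums : ∑ i, ‖S i 0 ψ‖ ^ 2 = ∑ i, α i ^ 2 :=
      le_antisymm (hsum1.trans_eq hsum.symm) (Finset.sum_le_sum hle)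
    intro i
    have heq : ‖S i 0 ψ‖ ^ 2 = α i ^ 2 := by
      by_contra hne
      have hlt : α i ^ 2 < ‖S i 0 ψ‖ ^ 2 :=
        lt_of_le_of_ne (hle i (Finset.mem_univ i)) (Ne.symm hne)
      have : ∑ j, α j ^ 2 < ∑ j, ‖S j 0 ψ‖ ^ 2 :=
        Finset.sum_lt_sum hle ⟨i, Finset.mem_univ i, hlt⟩
      linarith [hsums]
    nlinarith [norm_nonneg (S i 0 ψ), (hα i).le]
  have hTnorm : ∀ i, ‖T i 0 ψ‖ = α i := norm_eq T hTn hlowT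
  have hRnorm : ∀ i, ‖R i 0 ψ‖ = α i := norm_eq R hRn hlowR
  -- key relations
  have hα' : ∀ i, (α i : ℂ) ≠ 0 := fun i => by exact_mod_cast (hα i).ne'
  have hRadj : ∀ i, (α i : ℂ) • ContinuousLinearMap.adjoint (R i 0) ψ = T i 0 ψ := by
    intro i
    have hnormeq : ‖(R i 0) (T i 0 ψ)‖ = ‖T i 0 ψ‖ := by
      rw [hRT i i, hTnorm i]
      simp [norm_smul, hψ, abs_of_pos (hα i)]
    have h := adjoint_apply_of_norm_eq (R i 0) (col_norm_le R hRn i) (T i 0 ψ) hnormeq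
    rw [hRT i i, map_smul] at h
    simpa using h
  have hTadj : ∀ i, (α i : ℂ) • ContinuousLinearMap.adjoint (T i 0) ψ = R i 0 ψ := by
    intro i
    have hnormeq : ‖(T i 0) (R i 0 ψ)‖ = ‖R i 0 ψ‖ := by
      rw [hTR i i, hRnorm i]
      simp [norm_smul, hψ, abs_of_pos (hα i)]
    have h := adjoint_apply_of_norm_eq (T i 0) (col_norm_le T hTn i) (R i 0 ψ) hnormeq
    rw [hTR i i, map_smul] at h
    simpa using h
  -- memberships of word operators
  have hprodR : ∀ μ : List (Fin d), ((μ.map fun i => R i 0).prod) ∈ M := by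
    intro μ
    induction μ with
    | nil => simpa using one_mem M
    | cons j μ' ih => rw [List.map_cons, List.prod_cons]; exact mul_mem (hRmem j 0) ih
  have hprodT : ∀ μ : List (Fin d), ((μ.map fun i => T i 0).prod) ∈ M.commutant := by
    intro μ
    induction μ with
    | nil => simpa using one_mem M.commutant
    | cons j μ' ih => rw [List.map_cons, List.prod_cons]; exact mul_mem (hTmem j 0) ih
  have hadjR : ∀ μ : List (Fin d),
      ContinuousLinearMap.adjoint ((μ.map fun i => R i 0).prod) ∈ M := by
    intro μ; rw [← ContinuousLinearMap.star_eq_adjoint]; exact star_mem (hprodR μ)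
  have hadjT : ∀ μ : List (Fin d),
      ContinuousLinearMap.adjoint ((μ.map fun i => T i 0).prod) ∈ M.commutant := by
    intro μ; rw [← ContinuousLinearMap.star_eq_adjoint]; exact star_mem (hprodT μ)
  have hαprod : ∀ μ : List (Fin d), 0 < (μ.map α).prod := by
    intro μ
    induction μ with
    | nil => simp
    | cons j μ' ih => rw [List.map_cons, List.prod_cons]; exact mul_pos (hα j) ih
  have hαprod' : ∀ μ : List (Fin d), (((μ.map α).prod : ℝ) : ℂ) ≠ 0 := fun μ => by
    exact_mod_cast (hαprod μ).ne'
  have adjmul : ∀ A B : H →L[ℂ] H, ContinuousLinearMap.adjoint (A * B)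
      = ContinuousLinearMap.adjoint B * ContinuousLinearMap.adjoint A := by
    intro A B
    rw [← ContinuousLinearMap.star_eq_adjoint, ← ContinuousLinearMap.star_eq_adjoint,
      ← ContinuousLinearMap.star_eq_adjoint, star_mul]
  -- word relations
  have C1 : ∀ ν : List (Fin d), ((ν.map fun i => R i 0).prod) ψ
      = (((ν.map α).prod : ℝ) : ℂ) •
        ContinuousLinearMap.adjoint ((ν.map fun i => T i 0).prod) ψ := by
    intro ν
    induction ν with
    | nil =>
      simp [← ContinuousLinearMap.star_eq_adjoint]
    | cons j ν' ih =>
      simp only [List.map_cons, List.prod_cons, ContinuousLinearMap.mul_apply]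
      rw [ih, map_smul, happcomm (R j 0) (hRmem j 0) _ (hadjT ν') ψ,
        ← hTadj j, map_smul, smul_smul, adjmul, ContinuousLinearMap.mul_apply]
      congr 1
      push_cast
      ring
  have C2 : ∀ ν : List (Fin d), ((ν.map fun i => T i 0).prod) ψ
      = (((ν.map α).prod : ℝ) : ℂ) •
        ContinuousLinearMap.adjoint ((ν.map fun i => R i 0).prod) ψ := by
    intro ν
    induction ν with
    | nil =>
      simp [← ContinuousLinearMap.star_eq_adjoint]
    | cons j ν' ih =>
      simp only [List.map_cons, List.prod_cons, ContinuousLinearMap.mul_apply]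
      rw [ih, map_smul, ← happcomm _ (hadjR ν') (T j 0) (hTmem j 0) ψ,
        ← hRadj j, map_smul, smul_smul, adjmul, ContinuousLinearMap.mul_apply]
      congr 1
      push_cast
      ring
  have hadjRψ : ∀ μ : List (Fin d), ContinuousLinearMap.adjoint ((μ.map fun i => R i 0).prod) ψ
      = (((μ.map α).prod : ℝ) : ℂ)⁻¹ • ((μ.map fun i => T i 0).prod) ψ := by
    intro μ
    rw [eq_comm, inv_smul_eq_iff₀ (hαprod' μ), ← C2 μ]
  have hadjTψ : ∀ μ : List (Fin d), ContinuousLinearMap.adjoint ((μ.map fun i => T i 0).prod) ψ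
      = (((μ.map α).prod : ℝ) : ℂ)⁻¹ • ((μ.map fun i => R i 0).prod) ψ := by
    intro μ
    rw [eq_comm, inv_smul_eq_iff₀ (hαprod' μ), ← C1 μ]
  intro μ ν
  constructor
  · rw [C1 ν, map_smul, happcomm _ (hadjR μ) _ (hadjT ν) ψ, hadjRψ μ, map_smul, smul_smul]
    congr 1
    push_cast
    ring
  · rw [C2 ν, map_smul, ← happcomm _ (hadjR ν) _ (hadjT μ) ψ, hadjTψ μ, map_smul, smul_smul]
    congr 1
    push_cast
    ring
end

section
/- Let H be a separable complex Hilbert space, let M ⊆ B(H) be a von Neumann algebra, let d ∈ ℕ with d ≥ 2, and let ψ ∈ H be a unit vector. Then the set E(M, ψ, d) of all tuples α : Fin d → ℝ with α i > 0 for all i and ∑ i, (α i)^2 = 1 for which there exists a contraction R in M_d ⊗ M such that (R, ψ) is a monopartite exact embezzlement protocol for α in (M, H), is countable. -/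
open scoped InnerProductSpace
open ContinuousLinearMap

variable {H : Type*} [NormedAddCommGroup H] [InnerProductSpace ℂ H] [CompleteSpace H]

set_option linter.unusedSectionVars false
set_option linter.unusedVariables false

/-- The embedding of `H` into slot `0` of `ℓ²(Fin d; H)`. -/
noncomputable def iota0 {d : ℕ} [NeZero d] : H →L[ℂ] (PiLp 2 fun _ : Fin d => H) :=
  (((PiLp.continuousLinearEquiv 2 ℂ (fun _ : Fin d => H)).symm :
      (∀ _ : Fin d, H) →L[ℂ] (PiLp 2 fun _ : Fin d => H))) ∘L
    (ContinuousLinearMap.pi fun k : Fin d =>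
      if k = 0 then ContinuousLinearMap.id ℂ H else 0)

lemma iota0_apply {d : ℕ} [NeZero d] (ξ : H) (k : Fin d) :
    (iota0 ξ : PiLp 2 fun _ : Fin d => H) k = if k = 0 then ξ else 0 := by
  show (if k = 0 then ContinuousLinearMap.id ℂ H else 0) ξ = _
  split <;> simp

lemma blockOp_apply' {d : ℕ} (R : Fin d → Fin d → H →L[ℂ] H)
    (x : PiLp 2 fun _ : Fin d => H) (i : Fin d) :
    (blockOp R x) i = ∑ j, R i j (x j) := by
  show (∑ j, (R i j) ∘L (ContinuousLinearMap.proj j)) x = _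
  simp [ContinuousLinearMap.sum_apply]

lemma iota0_norm {d : ℕ} [NeZero d] (ξ : H) : ‖(iota0 ξ : PiLp 2 fun _ : Fin d => H)‖ = ‖ξ‖ := by
  rw [PiLp.norm_eq_of_L2]
  have h : ∀ k : Fin d, ‖(iota0 ξ : PiLp 2 fun _ : Fin d => H) k‖ ^ 2
      = if k = 0 then ‖ξ‖ ^ 2 else 0 := by
    intro k; rw [iota0_apply]; split <;> simp
  rw [Finset.sum_congr rfl fun k _ => h k, Finset.sum_ite_eq' Finset.univ 0 fun _ => ‖ξ‖ ^ 2]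
  simp [Real.sqrt_sq (norm_nonneg ξ)]

/-- For an exact protocol with `∑ βᵢ² = 1`, the vector `ψ` is fixed by the "column" channel:
`ψ = ∑ₖ (R k 0)* (R k 0 ψ)`. -/
lemma protocol_fixed_point (M : VonNeumannAlgebra H) {d : ℕ} [NeZero d] {β : Fin d → ℝ}
    {S : Fin d → Fin d → H →L[ℂ] H} {ψ : H}
    (hs : ∑ i, β i ^ 2 = 1) (hP : MonopartiteProtocol M β S ψ) :
    ψ = ∑ k, adjoint (S k 0) (S k 0 ψ) := by
  obtain ⟨⟨hmem, hcon⟩, hψ, hp⟩ := hP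
  set C : H →L[ℂ] (PiLp 2 fun _ : Fin d => H) := (blockOp S) ∘L iota0 with hC
  have hCap : ∀ (ξ : H) (k : Fin d), (C ξ) k = S k 0 ξ := by
    intro ξ k
    show (blockOp S (iota0 ξ)) k = _
    rw [blockOp_apply']
    have h : ∀ j : Fin d, S k j ((iota0 ξ : PiLp 2 fun _ : Fin d => H) j)
        = if j = 0 then S k j ξ else 0 := by
      intro j; rw [iota0_apply]; split <;> simp
    rw [Finset.sum_congr rfl fun j _ => h j, Finset.sum_ite_eq' Finset.univ 0]
    simp
  have hCnorm : ∀ ξ : H, ‖C ξ‖ ≤ ‖ξ‖ := by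
    intro ξ
    calc ‖C ξ‖ = ‖blockOp S (iota0 ξ)‖ := rfl
    _ ≤ ‖blockOp S‖ * ‖(iota0 ξ : PiLp 2 fun _ : Fin d => H)‖ := le_opNorm _ _
    _ ≤ 1 * ‖ξ‖ := by
        rw [iota0_norm]; exact mul_le_mul_of_nonneg_right hcon (norm_nonneg _)
    _ = ‖ξ‖ := one_mul _
  have hCinner : ∀ ξ η : H, ⟪C ξ, C η⟫_ℂ = ∑ k, ⟪S k 0 ξ, S k 0 η⟫_ℂ := by
    intro ξ η
    rw [PiLp.inner_apply]
    exact Finset.sum_congr rfl fun k _ => by rw [hCap, hCap]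
  set w : H := ∑ k, adjoint (S k 0) (S k 0 ψ) with hw
  have hwin : ∀ η : H, ⟪w, η⟫_ℂ = ⟪C ψ, C η⟫_ℂ := by
    intro η
    rw [hCinner, hw, sum_inner]
    exact Finset.sum_congr rfl fun k _ => adjoint_inner_left _ _ _
  have hdiag : ∀ k : Fin d, ⟪S k 0 ψ, S k 0 ψ⟫_ℂ = ((β k : ℂ)) ^ 2 := by
    intro k
    have h1 := hp 1 (one_mem M) k k
    simp only [ContinuousLinearMap.one_apply, if_pos rfl] at h1
    rw [adjoint_inner_left] at h1
    rw [h1, inner_self_eq_norm_sq_to_K, hψ]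
    norm_num
  have hwψ : ⟪w, ψ⟫_ℂ = 1 := by
    rw [hwin ψ, hCinner, Finset.sum_congr rfl fun k _ => hdiag k]
    have h2 : ((∑ k, β k ^ 2 : ℝ) : ℂ) = 1 := by rw [hs]; norm_num
    rw [← h2]; push_cast; ring
  have hwnorm : ‖w‖ ≤ 1 := by
    have h2 : ‖w‖ ^ 2 ≤ ‖w‖ := by
      have h3 : (‖w‖ : ℝ) ^ 2 = RCLike.re ⟪w, w⟫_ℂ := (inner_self_eq_norm_sq (𝕜 := ℂ) w).symm
      rw [h3, hwin w]
      calc RCLike.re ⟪C ψ, C w⟫_ℂ ≤ ‖⟪C ψ, C w⟫_ℂ‖ := RCLike.re_le_norm _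
      _ ≤ ‖C ψ‖ * ‖C w‖ := norm_inner_le_norm _ _
      _ ≤ 1 * ‖w‖ :=
          mul_le_mul (by simpa [hψ] using hCnorm ψ) (hCnorm w) (norm_nonneg _) zero_le_one
      _ = ‖w‖ := one_mul _
    nlinarith [norm_nonneg w]
  have hle : ‖ψ - w‖ ^ 2 ≤ 0 := by
    rw [norm_sub_sq (𝕜 := ℂ)]
    have h4 : ⟪ψ, w⟫_ℂ = 1 := by rw [← inner_conj_symm, hwψ]; simp
    rw [h4, hψ]
    have h5 : RCLike.re (1 : ℂ) = 1 := by simp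
    rw [h5]
    nlinarith [hwnorm, norm_nonneg w]
  have h5 : ‖ψ - w‖ ^ 2 = 0 := le_antisymm hle (sq_nonneg _)
  have h6 : ψ - w = 0 := by
    rw [pow_eq_zero_iff (two_ne_zero)] at h5
    exact norm_eq_zero.mp h5
  exact (sub_eq_zero.mp h6)

/-- Key orthogonality: the column vectors of two exact protocols on the same `ψ` with distinct
squared coefficients are orthogonal. -/
lemma key_orth (M : VonNeumannAlgebra H) {d : ℕ} [NeZero d] {α β : Fin d → ℝ}
    {R S : Fin d → Fin d → H →L[ℂ] H} {ψ : H}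
    (hsα : ∑ i, α i ^ 2 = 1) (hsβ : ∑ i, β i ^ 2 = 1)
    (hR : MonopartiteProtocol M α R ψ) (hS : MonopartiteProtocol M β S ψ)
    (i j : Fin d) (hne : ((α i : ℂ)) ^ 2 ≠ ((β j : ℂ)) ^ 2) :
    ⟪R i 0 ψ, S j 0 ψ⟫_ℂ = 0 := by
  have hψβ := protocol_fixed_point M hsβ hS
  have hψα := protocol_fixed_point M hsα hR
  set m : ℂ := ⟪(R i 0) (adjoint (S j 0) ψ), ψ⟫_ℂ with hm
  have hB : ⟪R i 0 ψ, S j 0 ψ⟫_ℂ = (β j : ℂ) ^ 2 * m := by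
    have hexp : R i 0 ψ = ∑ k, (R i 0 * adjoint (S k 0)) (S k 0 ψ) := by
      conv_lhs => rw [hψβ]
      rw [map_sum]
      exact Finset.sum_congr rfl fun k _ => rfl
    rw [hexp, sum_inner]
    have hterm : ∀ k : Fin d,
        ⟪(R i 0 * adjoint (S k 0)) (S k 0 ψ), S j 0 ψ⟫_ℂ
          = if j = k then (β j : ℂ) ^ 2 * ⟪(R i 0 * adjoint (S k 0)) ψ, ψ⟫_ℂ else 0 := by
      intro k
      have hXmem : (R i 0 * adjoint (S k 0)) ∈ M := by
        apply mul_mem (hR.1.1 i 0)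
        rw [← ContinuousLinearMap.star_eq_adjoint]
        exact star_mem (hS.1.1 k 0)
      have hp := hS.2.2 _ hXmem j k
      rw [adjoint_inner_left] at hp
      rw [hp]
      split <;> ring
    rw [Finset.sum_congr rfl fun k _ => hterm k,
      Finset.sum_ite_eq Finset.univ j
        (fun k => (β j : ℂ) ^ 2 * ⟪(R i 0 * adjoint (S k 0)) ψ, ψ⟫_ℂ)]
    simp [mul_apply, hm]
  have hCstep : ⟪S j 0 ψ, R i 0 ψ⟫_ℂ
      = (α i : ℂ) ^ 2 * ⟪S j 0 (adjoint (R i 0) ψ), ψ⟫_ℂ := by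
    have hexp : S j 0 ψ = ∑ k, (S j 0 * adjoint (R k 0)) (R k 0 ψ) := by
      conv_lhs => rw [hψα]
      rw [map_sum]
      exact Finset.sum_congr rfl fun k _ => rfl
    rw [hexp, sum_inner]
    have hterm : ∀ k : Fin d,
        ⟪(S j 0 * adjoint (R k 0)) (R k 0 ψ), R i 0 ψ⟫_ℂ
          = if i = k then (α i : ℂ) ^ 2 * ⟪(S j 0 * adjoint (R k 0)) ψ, ψ⟫_ℂ else 0 := by
      intro k
      have hXmem : (S j 0 * adjoint (R k 0)) ∈ M := by
        apply mul_mem (hS.1.1 j 0)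
        rw [← ContinuousLinearMap.star_eq_adjoint]
        exact star_mem (hR.1.1 k 0)
      have hp := hR.2.2 _ hXmem i k
      rw [adjoint_inner_left] at hp
      rw [hp]
      split <;> ring
    rw [Finset.sum_congr rfl fun k _ => hterm k,
      Finset.sum_ite_eq Finset.univ i
        (fun k => (α i : ℂ) ^ 2 * ⟪(S j 0 * adjoint (R k 0)) ψ, ψ⟫_ℂ)]
    simp [mul_apply]
  have hconjm : (starRingEnd ℂ) m = ⟪S j 0 (adjoint (R i 0) ψ), ψ⟫_ℂ := by
    rw [hm, inner_conj_symm, ← adjoint_inner_left, adjoint_inner_right]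
  have hCeq : (starRingEnd ℂ) ⟪R i 0 ψ, S j 0 ψ⟫_ℂ = (α i : ℂ) ^ 2 * (starRingEnd ℂ) m := by
    rw [inner_conj_symm, hCstep, hconjm]
  have hBc : (starRingEnd ℂ) ⟪R i 0 ψ, S j 0 ψ⟫_ℂ = (β j : ℂ) ^ 2 * (starRingEnd ℂ) m := by
    rw [hB, map_mul]
    congr 1
    rw [map_pow, Complex.conj_ofReal]
  have hzero : ((α i : ℂ) ^ 2 - (β j : ℂ) ^ 2) * (starRingEnd ℂ) m = 0 := by
    rw [sub_mul, ← hCeq, ← hBc, sub_self]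
  have hm0 : m = 0 := by
    rcases mul_eq_zero.mp hzero with h | h
    · exact absurd (sub_eq_zero.mp h) hne
    · have := congrArg (starRingEnd ℂ) h
      simpa using this
  rw [hB, hm0, mul_zero]

lemma protocol_norm (M : VonNeumannAlgebra H) {d : ℕ} [NeZero d] {α : Fin d → ℝ}
    {R : Fin d → Fin d → H →L[ℂ] H} {ψ : H} (hR : MonopartiteProtocol M α R ψ) (i : Fin d) :
    ⟪R i 0 ψ, R i 0 ψ⟫_ℂ = ((α i : ℂ)) ^ 2 := by
  have h1 := hR.2.2 1 (one_mem M) i i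
  simp only [ContinuousLinearMap.one_apply, if_pos rfl] at h1
  rw [adjoint_inner_left] at h1
  rw [h1, inner_self_eq_norm_sq_to_K, hR.2.1]
  norm_num

/-- If `H` is a separable Hilbert space, `M ⊆ B(H)` a von Neumann algebra, `d ≥ 2` and
`ψ ∈ H` a unit vector, then the set of Schmidt-coefficient tuples `α` for which some
contraction `R` in `M_d ⊗ M` makes `(R, ψ)` a monopartite exact embezzlement protocol for
`α` in `(M, H)` is countable. -/
theorem embezzlable_tuples_countable
    {H : Type*} [NormedAddCommGroup H] [InnerProductSpace ℂ H] [CompleteSpace H]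
    [TopologicalSpace.SeparableSpace H]
    (M : VonNeumannAlgebra H) {d : ℕ} [NeZero d] (hd : 2 ≤ d)
    (ψ : H) (hψ : ‖ψ‖ = 1) :
    Set.Countable {α : Fin d → ℝ |
      (∀ i, 0 < α i) ∧ (∑ i, (α i) ^ 2 = 1) ∧
        ∃ R : Fin d → Fin d → H →L[ℂ] H, MonopartiteProtocol M α R ψ} := by
  classical
  set Sset : Set ℝ := {r : ℝ |
    ∃ (i : Fin d) (α : Fin d → ℝ) (R : Fin d → Fin d → H →L[ℂ] H),
      (∀ k, 0 < α k) ∧ (∑ k, α k ^ 2 = 1) ∧ MonopartiteProtocol M α R ψ ∧ α i = r}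
    with hSset
  have hScount : Sset.Countable := by
    obtain ⟨D, hDc, hDd⟩ := TopologicalSpace.exists_countable_dense H
    have hch : ∀ r : Sset, ∃ (i : Fin d) (α : Fin d → ℝ)
        (R : Fin d → Fin d → H →L[ℂ] H),
        (∀ k, 0 < α k) ∧ (∑ k, α k ^ 2 = 1) ∧ MonopartiteProtocol M α R ψ ∧ α i = (r : ℝ) :=
      fun r => r.2
    choose idx af Rf hpos hsum hprot heq using hch
    have hrpos : ∀ r : Sset, 0 < (r : ℝ) := fun r => heq r ▸ hpos r (idx r)
    set u : Sset → H := fun r => Rf r (idx r) 0 ψ with hu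
    have hunorm : ∀ r : Sset, ⟪u r, u r⟫_ℂ = (((r : ℝ) : ℂ)) ^ 2 := by
      intro r
      have h := protocol_norm M (hprot r) (idx r)
      rw [heq r] at h
      exact h
    have huorth : ∀ r s : Sset, r ≠ s → ⟪u r, u s⟫_ℂ = 0 := by
      intro r s hrs
      refine key_orth M (hsum r) (hsum s) (hprot r) (hprot s) (idx r) (idx s) ?_
      rw [heq r, heq s]
      intro hEq
      apply hrs
      have h2 : ((r : ℝ)) ^ 2 = ((s : ℝ)) ^ 2 := by exact_mod_cast hEq
      have h3 := hrpos r
      have h4 := hrpos s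
      exact Subtype.ext (by nlinarith)
    set n : Sset → H := fun r => (((r : ℝ) : ℂ))⁻¹ • u r with hn
    have hnnorm : ∀ r : Sset, ‖n r‖ = 1 := by
      intro r
      have hr0 : ((r : ℝ) : ℂ) ≠ 0 := by exact_mod_cast (hrpos r).ne'
      have h1 : ⟪n r, n r⟫_ℂ = 1 := by
        simp only [hn, inner_smul_left, inner_smul_right, hunorm r]
        rw [map_inv₀, Complex.conj_ofReal]
        field_simp
      have h3 : (‖n r‖ : ℝ) ^ 2 = 1 := by
        have h2 := inner_self_eq_norm_sq (𝕜 := ℂ) (n r)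
        rw [h1] at h2
        simpa using h2.symm
      nlinarith [norm_nonneg (n r)]
    have hndist : ∀ r s : Sset, r ≠ s → ‖n r - n s‖ ^ 2 = 2 := by
      intro r s hrs
      rw [norm_sub_sq (𝕜 := ℂ), hnnorm r, hnnorm s]
      have h1 : ⟪n r, n s⟫_ℂ = 0 := by
        simp only [hn, inner_smul_left, inner_smul_right, huorth r s hrs, mul_zero]
      rw [h1]
      norm_num
    have hex : ∀ r : Sset, ∃ v, v ∈ D ∧ dist (n r) v < 1 / 2 := by
      intro r
      obtain ⟨v, hv, hd2⟩ := hDd.exists_dist_lt (n r) (by norm_num : (0:ℝ) < 1 / 2)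
      exact ⟨v, hv, hd2⟩
    choose F hFD hFd using hex
    have hFinj : Function.Injective fun r : Sset => (⟨F r, hFD r⟩ : D) := by
      intro r s hEq
      by_contra hrs
      have hFeq : F r = F s := congrArg Subtype.val hEq
      have h1 : dist (n r) (n s) < 1 := by
        calc dist (n r) (n s) ≤ dist (n r) (F r) + dist (F s) (n s) := by
              rw [hFeq]; exact dist_triangle _ _ _
        _ < 1 / 2 + 1 / 2 := by
              have h5 := hFd s
              rw [dist_comm] at h5
              exact add_lt_add (hFd r) h5
        _ = 1 := by norm_num
      have h2 : ‖n r - n s‖ ^ 2 = 2 := hndist r s hrs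
      rw [← dist_eq_norm] at h2
      nlinarith [dist_nonneg (x := n r) (y := n s)]
    haveI : Countable D := hDc.to_subtype
    exact Set.countable_coe_iff.mp (hFinj.countable)
  haveI : Countable Sset := hScount.to_subtype
  set A := {α : Fin d → ℝ |
      (∀ i, 0 < α i) ∧ (∑ i, (α i) ^ 2 = 1) ∧
        ∃ R : Fin d → Fin d → H →L[ℂ] H, MonopartiteProtocol M α R ψ} with hA
  have hGinj : Function.Injective fun a : A => (fun k => (⟨a.1 k,
      by
        obtain ⟨h1, h2, Rw, h3⟩ := a.2
        exact ⟨k, a.1, Rw, h1, h2, h3, rfl⟩⟩ : Sset) : Fin d → Sset) := by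
    intro a b hEq
    apply Subtype.ext
    funext k
    have h6 := congrFun hEq k
    exact congrArg Subtype.val h6
  exact Set.countable_coe_iff.mp (hGinj.countable)
end
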